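/- (Incompressibility of the matricization of a t-rank-1 circulant tensor.) Let n be a positive integer, let U ∈ Matrix.unitaryGroup (ZMod n) ℂ, and let c_1, …, c_p : ZMod n → ℂ be an orthonormal family (∑_s (c_i s) · conj(c_j s) = 1 if i = j and 0 otherwise), so p ≤ n. Let 𝐀 : Matrix (ZMod n × ZMod n) (Fin p) ℂ be the matrix whose j-th column is the vectorization of U * Matrix.circulant (c_j), i.e. 𝐀 (a,i) j = (U * Matrix.circulant (c_j)) a i. Then for every natural number k ≤ p and every matrix B : Matrix (ZMod n × ZMod n) (Fin p) ℂ with rank B ≤ k, one has ‖𝐀 − B‖_F² ≥ (p − k) · n, and there exists such a B with rank B ≤ k attaining ‖𝐀 − B‖_F² = (p − k) · n. -/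

import Mathlib

open scoped BigOperators ComplexConjugate Matrix

noncomputable section

variable {R : Type*}

/-- Mode-3 product of a third-order tensor (encoded by its frontal slices)
with a transform matrix: `(A ×₃ M) i = ∑ j, (M i j) • (A j)`. -/
def mode3 [RCLike R] {ι α β : Type*} [Fintype ι]
    (A : ι → Matrix α β R) (M : Matrix ι ι R) : ι → Matrix α β R :=
  fun i => ∑ j, M i j • A j

/-- Frobenius (entrywise ℓ²) norm of a matrix. -/
def fnorm [RCLike R] {α β : Type*} [Fintype α] [Fintype β] (A : Matrix α β R) : ℝ :=
  Real.sqrt (∑ a, ∑ b, ‖A a b‖ ^ 2)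

/-- Frobenius norm of a tensor: `‖A‖² = ∑ i, ‖A i‖²`. -/
def tnorm [RCLike R] {ι α β : Type*} [Fintype ι] [Fintype α] [Fintype β]
    (A : ι → Matrix α β R) : ℝ :=
  Real.sqrt (∑ i, fnorm (A i) ^ 2)

/-- The ⋆_M product: facewise product in the transform domain, then inverse transform. -/
def tprodM [RCLike R] {ι m p q : Type*} [Fintype ι] [DecidableEq ι] [Fintype p]
    (M : Matrix ι ι R) (A : ι → Matrix m p R) (B : ι → Matrix p q R) :
    ι → Matrix m q R :=
  mode3 (fun i => mode3 A M i * mode3 B M i) M⁻¹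

/-- Conjugate transpose of a tensor under ⋆_M. -/
def tconj [RCLike R] {ι m p : Type*} [Fintype ι] [DecidableEq ι]
    (M : Matrix ι ι R) (A : ι → Matrix m p R) : ι → Matrix p m R :=
  mode3 (fun i => (mode3 A M i)ᴴ) M⁻¹

/-- The identity tensor under ⋆_M. -/
def tId [RCLike R] (m : Type*) [DecidableEq m] {ι : Type*} [Fintype ι] [DecidableEq ι]
    (M : Matrix ι ι R) : ι → Matrix m m R :=
  mode3 (fun _ => (1 : Matrix m m R)) M⁻¹

/-- A square tensor `Q` is ⋆_M-unitary if `Qᴴ ⋆_M Q = Q ⋆_M Qᴴ = I`. -/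
def tUnitary [RCLike R] {ι m : Type*} [Fintype ι] [DecidableEq ι] [Fintype m] [DecidableEq m]
    (M : Matrix ι ι R) (Q : ι → Matrix m m R) : Prop :=
  tprodM M (tconj M Q) Q = tId m M ∧ tprodM M Q (tconj M Q) = tId m M

/-- A t-SVDM of `A`: a factorization `A = U ⋆_M S ⋆_M Vᴴ` with `U`, `V` ⋆_M-unitary and every
transform-domain slice `Ŝ i` diagonal with real, nonnegative, nonincreasing diagonal entries. -/
def IsTSVDM [RCLike R] {m p n : ℕ} (M : Matrix (Fin n) (Fin n) R)
    (A : Fin n → Matrix (Fin m) (Fin p) R)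
    (U : Fin n → Matrix (Fin m) (Fin m) R)
    (S : Fin n → Matrix (Fin m) (Fin p) R)
    (V : Fin n → Matrix (Fin p) (Fin p) R) : Prop :=
  A = tprodM M (tprodM M U S) (tconj M V) ∧
  tUnitary M U ∧ tUnitary M V ∧
  (∀ (i : Fin n) (a : Fin m) (b : Fin p), (a : ℕ) ≠ (b : ℕ) → mode3 S M i a b = 0) ∧
  (∀ (i : Fin n) (a : Fin m) (b : Fin p), (a : ℕ) = (b : ℕ) →
      ∃ r : ℝ, 0 ≤ r ∧ mode3 S M i a b = (r : R)) ∧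
  (∀ (i : Fin n) (a a' : Fin m) (b b' : Fin p), (a : ℕ) = (b : ℕ) → (a' : ℕ) = (b' : ℕ) →
      (a : ℕ) ≤ (a' : ℕ) →
      RCLike.re (mode3 S M i a' b') ≤ RCLike.re (mode3 S M i a b))

/-- Transform-domain slice of a truncation:
(first k columns of Û) * (leading k×k block of Ŝ) * (first k columns of V̂)ᴴ. -/
def truncSlice [RCLike R] {m p : ℕ} (k : ℕ) (Uh : Matrix (Fin m) (Fin m) R)
    (Sh : Matrix (Fin m) (Fin p) R) (Vh : Matrix (Fin p) (Fin p) R) :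
    Matrix (Fin m) (Fin p) R :=
  Matrix.of fun a b =>
    ∑ j : Fin m, ∑ l : Fin p,
      if (j : ℕ) < k ∧ (l : ℕ) < k then Uh a j * Sh j l * star (Vh b l) else 0

/-- The multi-rank-ρ truncation of a t-SVDM (use `ρ = fun _ => k` for the t-rank-k truncation). -/
def truncTensor [RCLike R] {m p n : ℕ} (M : Matrix (Fin n) (Fin n) R)
    (U : Fin n → Matrix (Fin m) (Fin m) R) (S : Fin n → Matrix (Fin m) (Fin p) R)
    (V : Fin n → Matrix (Fin p) (Fin p) R) (ρ : Fin n → ℕ) :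
    Fin n → Matrix (Fin m) (Fin p) R :=
  mode3 (fun i => truncSlice (ρ i) (mode3 U M i) (mode3 S M i) (mode3 V M i)) M⁻¹

/-- The permuted tensor `Aᴾ`: `(Aᴾ c) i j = (A i) c j`. -/
def tperm [RCLike R] {m p n : ℕ} (A : Fin n → Matrix (Fin m) (Fin p) R) :
    Fin m → Matrix (Fin n) (Fin p) R :=
  fun c => Matrix.of fun i j => A i c j


lemma olive_star_dot {α : Type*} [Fintype α] (y : α → ℂ) :
    dotProduct (star y) y = ((∑ a, ‖y a‖ ^ 2 : ℝ) : ℂ) := by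
  simp only [dotProduct, Pi.star_apply, Complex.star_def]
  push_cast
  exact Finset.sum_congr rfl fun a _ => by rw [Complex.conj_mul']

lemma olive_fnorm_sq {α β : Type*} [Fintype α] [Fintype β] (A : Matrix α β ℂ) :
    fnorm A ^ 2 = ∑ a, ∑ b, ‖A a b‖ ^ 2 := by
  unfold fnorm
  exact Real.sq_sqrt (by positivity)

lemma olive_bessel {p m : ℕ} {α : Type*} [Fintype α] (M : Matrix α (Fin p) ℂ)
    (u : Fin m → EuclideanSpace ℂ (Fin p)) (hu : Orthonormal ℂ u) :
    ∑ t, ∑ a, ‖M.mulVec (u t) a‖ ^ 2 ≤ ∑ a, ∑ j, ‖M a j‖ ^ 2 := by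
  rw [Finset.sum_comm]
  refine Finset.sum_le_sum fun a _ => ?_
  set v : EuclideanSpace ℂ (Fin p) := WithLp.toLp 2 (fun j => conj (M a j)) with hv
  have key : ∀ t, M.mulVec (u t) a = @inner ℂ _ _ v (u t) := by
    intro t
    simp [PiLp.inner_apply, RCLike.inner_apply, hv, Matrix.mulVec, dotProduct, mul_comm]
  calc ∑ t, ‖M.mulVec (u t) a‖ ^ 2 = ∑ t, ‖@inner ℂ _ _ (u t) v‖ ^ 2 := by
        refine Finset.sum_congr rfl fun t _ => ?_
        rw [key t, ← inner_conj_symm (u t) v, RCLike.norm_conj]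
    _ ≤ ‖v‖ ^ 2 := hu.sum_inner_products_le v
    _ = ∑ j, ‖M a j‖ ^ 2 := by
        rw [EuclideanSpace.norm_eq, Real.sq_sqrt (by positivity)]
        simp [hv]

lemma olive_quad {p : ℕ} {α : Type*} [Fintype α] (A : Matrix α (Fin p) ℂ) (nc : ℂ)
    (hgram : Aᴴ * A = nc • 1) (x : Fin p → ℂ) :
    dotProduct (star (A.mulVec x)) (A.mulVec x)
      = nc * dotProduct (star x) x := by
  rw [Matrix.star_mulVec, ← Matrix.dotProduct_mulVec, Matrix.mulVec_mulVec, hgram,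
    Matrix.smul_mulVec, Matrix.one_mulVec, dotProduct_smul, smul_eq_mul]

lemma olive_gram (n : ℕ) [NeZero n] (p : ℕ)
    (U : Matrix (ZMod n) (ZMod n) ℂ) (hU : U ∈ Matrix.unitaryGroup (ZMod n) ℂ)
    (c : Fin p → ZMod n → ℂ)
    (horth : ∀ i j : Fin p,
      (∑ s, c i s * starRingEnd ℂ (c j s)) = if i = j then 1 else 0) :
    (Matrix.of fun (ai : ZMod n × ZMod n) (j : Fin p) =>
          (U * Matrix.circulant (c j)) ai.1 ai.2)ᴴ *
      (Matrix.of fun (ai : ZMod n × ZMod n) (j : Fin p) =>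
          (U * Matrix.circulant (c j)) ai.1 ai.2) = (n : ℂ) • 1 := by
  ext i j
  have hUU : Uᴴ * U = 1 := hU.1
  rw [Matrix.mul_apply]
  simp only [Matrix.conjTranspose_apply, Matrix.of_apply, Matrix.smul_apply,
    Matrix.one_apply, smul_eq_mul]
  have key : ∀ b : ZMod n, ∑ a : ZMod n, star ((U * Matrix.circulant (c i)) a b) *
      (U * Matrix.circulant (c j)) a b = if i = j then 1 else 0 := by
    intro b
    have h1 : ∑ a : ZMod n, star ((U * Matrix.circulant (c i)) a b) *
        (U * Matrix.circulant (c j)) a b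
        = ((U * Matrix.circulant (c i))ᴴ * (U * Matrix.circulant (c j))) b b := by
      simp [Matrix.mul_apply, Matrix.conjTranspose_apply, mul_comm]
    rw [h1]
    have h2 : (U * Matrix.circulant (c i))ᴴ * (U * Matrix.circulant (c j))
        = (Matrix.circulant (c i))ᴴ * Matrix.circulant (c j) := by
      rw [Matrix.conjTranspose_mul, Matrix.mul_assoc, ← Matrix.mul_assoc Uᴴ, hUU, Matrix.one_mul]
    rw [h2]
    have h3 : ((Matrix.circulant (c i))ᴴ * Matrix.circulant (c j)) b b
        = ∑ a : ZMod n, conj (c i (a - b)) * c j (a - b) := by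
      simp [Matrix.mul_apply, Matrix.conjTranspose_apply, Matrix.circulant_apply]
    rw [h3]
    rw [show (∑ a : ZMod n, conj (c i (a - b)) * c j (a - b))
        = ∑ s : ZMod n, conj (c i s) * c j s from
      Equiv.sum_comp (Equiv.subRight b) (fun s => conj (c i s) * c j s)]
    calc ∑ s : ZMod n, conj (c i s) * c j s = conj (∑ s, c i s * conj (c j s)) := by
          rw [map_sum]; refine Finset.sum_congr rfl fun s _ => ?_; ring_nf; simp [mul_comm]
      _ = if i = j then 1 else 0 := by
          rw [horth i j]; split <;> simp
  calc (∑ ab : ZMod n × ZMod n, star ((U * Matrix.circulant (c i)) ab.1 ab.2) *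
        (U * Matrix.circulant (c j)) ab.1 ab.2)
      = ∑ a : ZMod n, ∑ b : ZMod n, star ((U * Matrix.circulant (c i)) a b) *
        (U * Matrix.circulant (c j)) a b := Fintype.sum_prod_type _
    _ = ∑ b : ZMod n, ∑ a : ZMod n, star ((U * Matrix.circulant (c i)) a b) *
        (U * Matrix.circulant (c j)) a b := Finset.sum_comm
    _ = ∑ _b : ZMod n, if i = j then (1:ℂ) else 0 := Finset.sum_congr rfl fun b _ => key b
    _ = (n : ℂ) * if i = j then 1 else 0 := by
        rw [Finset.sum_const, Finset.card_univ, ZMod.card, nsmul_eq_mul]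

/-- incompressibility of the matricization of a t-rank-1 circulant tensor:
for `U` unitary and `c_1,…,c_p` orthonormal, every rank-≤k approximation `B` of the
matricization `𝐀` (with columns `vec (U * circulant (c_j))`) has squared error at least
`(p−k)·n`, and this bound is attained. -/
theorem stmt19 (n : ℕ) [NeZero n] (p : ℕ)
    (U : Matrix (ZMod n) (ZMod n) ℂ) (hU : U ∈ Matrix.unitaryGroup (ZMod n) ℂ)
    (c : Fin p → ZMod n → ℂ)
    (horth : ∀ i j : Fin p,
      (∑ s, c i s * starRingEnd ℂ (c j s)) = if i = j then 1 else 0)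
    (k : ℕ) (hk : k ≤ p) :
    (∀ B : Matrix (ZMod n × ZMod n) (Fin p) ℂ, Matrix.rank B ≤ k →
      ((p - k : ℕ) : ℝ) * (n : ℝ) ≤
        fnorm ((Matrix.of fun (ai : ZMod n × ZMod n) (j : Fin p) =>
          (U * Matrix.circulant (c j)) ai.1 ai.2) - B) ^ 2) ∧
    ∃ B : Matrix (ZMod n × ZMod n) (Fin p) ℂ, Matrix.rank B ≤ k ∧
      fnorm ((Matrix.of fun (ai : ZMod n × ZMod n) (j : Fin p) =>
        (U * Matrix.circulant (c j)) ai.1 ai.2) - B) ^ 2 = ((p - k : ℕ) : ℝ) * (n : ℝ) := by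
  classical
  set A : Matrix (ZMod n × ZMod n) (Fin p) ℂ :=
    Matrix.of fun (ai : ZMod n × ZMod n) (j : Fin p) =>
      (U * Matrix.circulant (c j)) ai.1 ai.2 with hA
  have hgram : Aᴴ * A = (n : ℂ) • 1 := olive_gram n p U hU c horth
  -- column norms
  have coln : ∀ j : Fin p, (∑ a, ‖A a j‖ ^ 2 : ℝ) = n := by
    intro j
    have h := congrFun (congrFun hgram j) j
    rw [Matrix.mul_apply] at h
    simp only [Matrix.smul_apply, Matrix.one_apply_eq, smul_eq_mul, mul_one] at h
    have h2 : (∑ ab, Aᴴ j ab * A ab j)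
        = dotProduct (star (fun ab => A ab j)) (fun ab => A ab j) := by
      simp [dotProduct, Matrix.conjTranspose_apply]
    rw [h2, olive_star_dot] at h
    exact_mod_cast h
  constructor
  · -- lower bound
    intro B hB
    set e : EuclideanSpace ℂ (Fin p) ≃ₗ[ℂ] (Fin p → ℂ) := WithLp.linearEquiv 2 ℂ (Fin p → ℂ)
    set L : EuclideanSpace ℂ (Fin p) →ₗ[ℂ] ((ZMod n × ZMod n) → ℂ) :=
      B.mulVecLin ∘ₗ e.toLinearMap with hL
    set W : Submodule ℂ (EuclideanSpace ℂ (Fin p)) := LinearMap.ker L with hW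
    have hrange : LinearMap.range L = LinearMap.range B.mulVecLin := by
      rw [hL, LinearMap.range_comp, LinearEquiv.range, Submodule.map_top]
    have hrn := LinearMap.finrank_range_add_finrank_ker L
    rw [finrank_euclideanSpace, Fintype.card_fin, ← hW] at hrn
    have hrkW : p - k ≤ Module.finrank ℂ W := by
      have h1 : Module.finrank ℂ (LinearMap.range L) ≤ k := by
        rw [hrange]; exact hB
      omega
    set d := Module.finrank ℂ W with hd
    set ob := stdOrthonormalBasis ℂ W
    set u : Fin d → EuclideanSpace ℂ (Fin p) := fun t => ((ob t : W) : EuclideanSpace ℂ (Fin p))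
      with hu_def
    have hu : Orthonormal ℂ u := by
      rw [orthonormal_iff_ite]
      intro s t
      have h2 := (orthonormal_iff_ite.mp ob.orthonormal) s t
      rw [Submodule.coe_inner] at h2
      simpa [hu_def] using h2
    have hBu : ∀ t, B.mulVec (u t) = 0 := by
      intro t
      have hm : L (u t) = 0 := (ob t).2
      exact hm
    have hAu : ∀ t, ∑ a, ‖(A - B).mulVec (u t) a‖ ^ 2 = (n : ℝ) := by
      intro t
      have hsub : (A - B).mulVec (u t) = A.mulVec (u t) := by
        rw [Matrix.sub_mulVec, hBu t, sub_zero]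
      rw [hsub]
      have hq := olive_quad A (n : ℂ) hgram (u t)
      have hx1 : dotProduct (star (u t : Fin p → ℂ)) (u t : Fin p → ℂ) = 1 := by
        have hnorm : ‖u t‖ = 1 := hu.1 t
        rw [olive_star_dot]
        have : (∑ j, ‖(u t : Fin p → ℂ) j‖ ^ 2 : ℝ) = ‖u t‖ ^ 2 := by
          rw [EuclideanSpace.norm_eq, Real.sq_sqrt (by positivity)]
        rw [this, hnorm]
        norm_num
      rw [hx1, mul_one, olive_star_dot] at hq
      exact_mod_cast hq
    have hbes := olive_bessel (A - B) u hu
    have hsum : ∑ t : Fin d, ∑ a, ‖(A - B).mulVec (u t) a‖ ^ 2 = d * n := by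
      rw [Finset.sum_congr rfl fun t _ => hAu t, Finset.sum_const, Finset.card_univ,
        Fintype.card_fin, nsmul_eq_mul]
    calc ((p - k : ℕ) : ℝ) * (n : ℝ) ≤ (d : ℝ) * n := by
          have : ((p - k : ℕ) : ℝ) ≤ (d : ℝ) := by exact_mod_cast hrkW
          exact mul_le_mul_of_nonneg_right this (by positivity)
      _ = ∑ t : Fin d, ∑ a, ‖(A - B).mulVec (u t) a‖ ^ 2 := hsum.symm
      _ ≤ ∑ a, ∑ j, ‖(A - B) a j‖ ^ 2 := hbes
      _ = fnorm (A - B) ^ 2 := (olive_fnorm_sq _).symm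
  · -- attainment
    set dg : Fin p → ℂ := fun j => if (j : ℕ) < k then 1 else 0 with hdg
    refine ⟨A * Matrix.diagonal dg, ?_, ?_⟩
    · refine le_trans (Matrix.rank_mul_le_right A (Matrix.diagonal dg)) ?_
      rw [Matrix.rank_diagonal]
      have he : {j : Fin p // dg j ≠ 0} ≃ Fin k :=
        { toFun := fun j => ⟨(j.1 : ℕ), by
            by_contra h
            exact j.2 (by simp [hdg, h])⟩
          invFun := fun j => ⟨⟨(j : ℕ), lt_of_lt_of_le j.2 hk⟩, by simp [hdg, j.2]⟩
          left_inv := fun j => by ext; simp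
          right_inv := fun j => by ext; simp }
      rw [Fintype.card_congr he, Fintype.card_fin]
    · have hentry : ∀ (a : ZMod n × ZMod n) (j : Fin p),
          (A - A * Matrix.diagonal dg) a j = if (j : ℕ) < k then 0 else A a j := by
        intro a j
        rw [Matrix.sub_apply, Matrix.mul_diagonal]
        by_cases h : (j : ℕ) < k <;> simp [hdg, h]
      rw [olive_fnorm_sq, Finset.sum_comm]
      have hcol : ∀ j : Fin p, (∑ a, ‖(A - A * Matrix.diagonal dg) a j‖ ^ 2 : ℝ)
          = if (j : ℕ) < k then 0 else (n : ℝ) := by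
        intro j
        by_cases h : (j : ℕ) < k
        · simp [hentry _ j, h]
        · simp only [hentry _ j, if_neg h]
          rw [coln j]
      rw [Finset.sum_congr rfl fun j _ => hcol j]
      have hsplit : (∑ j : Fin p, if (j : ℕ) < k then (0:ℝ) else (n:ℝ))
          = ∑ j : Fin p, if ¬ (j : ℕ) < k then (n:ℝ) else 0 := by
        refine Finset.sum_congr rfl fun j _ => ?_
        split <;> simp_all
      rw [hsplit, ← Finset.sum_filter, Finset.sum_const, nsmul_eq_mul]
      have hcard : Fintype.card {j : Fin p // (j : ℕ) < k} = k := by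
        refine (Fintype.card_congr
          { toFun := fun j => (⟨(j.1 : ℕ), j.2⟩ : Fin k)
            invFun := fun j => ⟨⟨(j : ℕ), lt_of_lt_of_le j.2 hk⟩, j.2⟩
            left_inv := fun j => by ext; simp
            right_inv := fun j => by ext; simp }).trans (Fintype.card_fin k)
      congr 1
      rw [← Fintype.card_subtype, Fintype.card_subtype_compl, hcard, Fintype.card_fin]
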